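/- The set-valued map x ↦ 𝐔(x) is non-increasing on (1, ∞) with respect to set inclusion: for all reals x, y with 1 < y < x one has 𝐔(x) ⊆ 𝐔(y). -/

import Mathlib

open scoped ENNReal NNReal Classical

namespace Expansions

/-- Digit sequences over the alphabet `{0,1,…,M}`; index `i : ℕ` represents the
`(i+1)`-st digit `d_{i+1}` of the paper. -/
abbrev Digits (M : ℕ) := ℕ → Fin (M + 1)

/-- `π_q((d_i)) = Σ_{i≥1} d_i / q^i`. -/
noncomputable def piQ (M : ℕ) (q : ℝ) (d : Digits M) : ℝ :=
  ∑' i : ℕ, (d i : ℝ) / q ^ (i + 1)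

/-- `𝒰_q` : the set of real numbers having a unique `q`-expansion. -/
def Uq (M : ℕ) (q : ℝ) : Set ℝ := {x | ∃! d : Digits M, piQ M q d = x}

/-- `𝐔_q` : the set of sequences that are the unique `q`-expansion of their value. -/
def UqSym (M : ℕ) (q : ℝ) : Set (Digits M) :=
  {d | ∀ e : Digits M, piQ M q e = piQ M q d → e = d}

/-- `𝒰(x)` : the set of univoque bases of `x`. -/
def Ubases (M : ℕ) (x : ℝ) : Set ℝ :=
  {q | q ∈ Set.Ioc (1 : ℝ) ((M : ℝ) + 1) ∧ x ∈ Uq M q}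

/-- `q_x = min{M+1, 1+M/x}`. -/
noncomputable def qx (M : ℕ) (x : ℝ) : ℝ := min ((M : ℝ) + 1) (1 + (M : ℝ) / x)

/-- Strict lexicographic order on digit sequences. -/
def lexLt {M : ℕ} (c d : Digits M) : Prop := ∃ n, (∀ i < n, c i = d i) ∧ c n < d n

def lexLe {M : ℕ} (c d : Digits M) : Prop := c = d ∨ lexLt c d

/-- The sequence ends with `0^∞`. -/
def EndsInZero {M : ℕ} (d : Digits M) : Prop := ∃ N, ∀ n ≥ N, d n = 0

/-- `d` is the quasi-greedy `q`-expansion of `x`: the lexicographically largest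
`q`-expansion of `x` not ending with `0^∞`. -/
def IsQuasiGreedy (M : ℕ) (q x : ℝ) (d : Digits M) : Prop :=
  piQ M q d = x ∧ ¬ EndsInZero d ∧
    ∀ e : Digits M, piQ M q e = x → ¬ EndsInZero e → lexLe e d

/-- `Φ_x(q)`: the quasi-greedy `q`-expansion of `x` (junk value if none exists). -/
noncomputable def Phi (M : ℕ) (x q : ℝ) : Digits M :=
  if h : ∃ d : Digits M, IsQuasiGreedy M q x d then h.choose else fun _ => 0

/-- `𝐔(x) = {Φ_x(q) : q ∈ 𝒰(x)}`. -/
def UxSym (M : ℕ) (x : ℝ) : Set (Digits M) := (Phi M x) '' (Ubases M x)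

/-- `ρ((c_i),(d_i)) = (M+1)^{-inf{i ≥ 1 : c_i ≠ d_i}}` (our index `n` represents the
`(n+1)`-st digit, whence the exponent `-(n+1)`); `ρ(c,c) = 0`. -/
noncomputable def rho (M : ℕ) (c d : Digits M) : ℝ :=
  if c = d then 0
  else ((M : ℝ) + 1) ^ (-(((sInf {i | c i ≠ d i} : ℕ) : ℤ) + 1))

/-- Diameter of a set with respect to a distance function, valued in `ℝ≥0∞`. -/
noncomputable def gdiam {X : Type*} (dist : X → X → ℝ) (A : Set X) : ℝ≥0∞ :=
  ⨆ x ∈ A, ⨆ y ∈ A, ENNReal.ofReal (dist x y)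

/-- The `s`-dimensional Hausdorff outer measure with respect to a distance function:
`lim_{δ→0⁺} inf {Σ diam(C n)^s : A ⊆ ⋃ C n, diam (C n) ≤ δ}`. -/
noncomputable def gHMeasure {X : Type*} (dist : X → X → ℝ) (s : ℝ) (A : Set X) : ℝ≥0∞ :=
  ⨆ (δ : ℝ) (_ : 0 < δ),
    ⨅ (C : ℕ → Set X) (_ : A ⊆ ⋃ n, C n)
      (_ : ∀ n, gdiam dist (C n) ≤ ENNReal.ofReal δ),
      ∑' n, gdiam dist (C n) ^ s

/-- Hausdorff dimension with respect to a distance function. -/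
noncomputable def gdimH {X : Type*} (dist : X → X → ℝ) (A : Set X) : ℝ≥0∞ :=
  ⨆ (s : ℝ≥0) (_ : gHMeasure dist (s : ℝ) A = ⊤), (s : ℝ≥0∞)

/-- The generalized golden ratio `q_G`. -/
noncomputable def qG (M : ℕ) : ℝ :=
  if M % 2 = 0 then ((M / 2 : ℕ) : ℝ) + 1
  else (((M / 2 : ℕ) : ℝ) + 1 +
    Real.sqrt (((M / 2 : ℕ) : ℝ) ^ 2 + 6 * ((M / 2 : ℕ) : ℝ) + 5)) / 2

/-- `x_G = M/(q_G - 1)`. -/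
noncomputable def xG (M : ℕ) : ℝ := (M : ℝ) / (qG M - 1)

/-- The Komornik–Loreti constant `q_KL = min 𝒰(1)`. -/
noncomputable def qKL (M : ℕ) : ℝ := sInf (Ubases M 1)

/-- `x_KL = M/(q_KL - 1)`. -/
noncomputable def xKL (M : ℕ) : ℝ := (M : ℝ) / (qKL M - 1)

/-- `X_iso`: the set of `x > 0` such that `𝒰(x)` contains an isolated point. -/
def Xiso (M : ℕ) : Set ℝ :=
  {x | 0 < x ∧ ∃ q ∈ Ubases M x, ∃ ε > 0, Ubases M x ∩ Set.Ioo (q - ε) (q + ε) = {q}}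

/-- The bifurcation set `𝒱 = {q ∈ (1,M+1] : 𝐔_r ≠ 𝐔_q for all r > q}`. -/
def Vset (M : ℕ) : Set ℝ :=
  {q | q ∈ Set.Ioc (1 : ℝ) ((M : ℝ) + 1) ∧
    ∀ r ∈ Set.Ioc (1 : ℝ) ((M : ℝ) + 1), q < r → UqSym M r ≠ UqSym M q}

/-- The Thue–Morse sequence `τ_i` = parity of the binary digit sum of `i`. -/
def tm (i : ℕ) : ℕ := (Nat.digits 2 i).sum % 2


section Aux

variable {M : ℕ}

lemma digit_le (d : Digits M) (i : ℕ) : ((d i : ℕ) : ℝ) ≤ (M : ℝ) := by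
  exact_mod_cast Nat.le_of_lt_succ (d i).isLt

lemma digit_nonneg (d : Digits M) (i : ℕ) : (0:ℝ) ≤ ((d i : ℕ) : ℝ) := Nat.cast_nonneg _

lemma summable_div_pow (q : ℝ) (hq : 1 < q) (c : ℕ → ℝ) (B : ℝ) (hc : ∀ i, |c i| ≤ B) :
    Summable (fun i => c i / q ^ (i + 1)) := by
  have h0 : 0 < q := lt_trans one_pos hq
  have hlt : q⁻¹ < 1 := inv_lt_one_of_one_lt₀ hq
  have hgeo : Summable (fun i : ℕ => B * q⁻¹ ^ (i + 1)) := by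
    have := summable_geometric_of_lt_one (by positivity) hlt
    exact ((this.mul_left q⁻¹).mul_left B).congr (by intro i; ring)
  apply Summable.of_norm_bounded hgeo
  intro i
  have hpow : (0:ℝ) < q ^ (i+1) := by positivity
  rw [Real.norm_eq_abs, abs_div, abs_of_pos hpow, div_le_iff₀ hpow]
  calc |c i| ≤ B := hc i
    _ = B * q⁻¹ ^ (i+1) * q ^ (i+1) := by
        rw [mul_assoc, inv_pow, inv_mul_cancel₀ (ne_of_gt hpow), mul_one]

lemma abs_digit_le (d : Digits M) (i : ℕ) : |((d i : ℕ) : ℝ)| ≤ (M:ℝ) := by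
  rw [abs_of_nonneg (digit_nonneg d i)]; exact digit_le d i

lemma summable_piQ (q : ℝ) (hq : 1 < q) (d : Digits M) :
    Summable (fun i => ((d i : ℕ) : ℝ) / q ^ (i + 1)) :=
  summable_div_pow q hq _ (M:ℝ) (abs_digit_le d)

/-- geometric sum: ∑ B / q^(i+1) = B/(q-1) -/
lemma tsum_const_div_pow (q : ℝ) (hq : 1 < q) (B : ℝ) :
    ∑' i : ℕ, B / q ^ (i + 1) = B / (q - 1) := by
  have h0 : 0 < q := lt_trans one_pos hq
  have hlt : q⁻¹ < 1 := inv_lt_one_of_one_lt₀ hq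
  have hg : ∑' i : ℕ, q⁻¹ ^ i = (1 - q⁻¹)⁻¹ := tsum_geometric_of_lt_one (by positivity) hlt
  calc ∑' i : ℕ, B / q ^ (i+1) = ∑' i : ℕ, (B * q⁻¹) * q⁻¹ ^ i := by
        apply tsum_congr; intro i
        rw [div_eq_mul_inv, ← inv_pow, pow_succ]; ring
    _ = (B * q⁻¹) * (1 - q⁻¹)⁻¹ := by rw [tsum_mul_left, hg]
    _ = B / (q - 1) := by
        have hne : q - 1 ≠ 0 := by linarith
        have hqne : q ≠ 0 := by linarith
        field_simp

lemma tsum_le_of_le (q : ℝ) (hq : 1 < q) (c e : ℕ → ℝ) (B : ℝ)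
    (hc : ∀ i, |c i| ≤ B) (he : ∀ i, |e i| ≤ B) (h : ∀ i, c i ≤ e i) :
    ∑' i, c i / q ^ (i+1) ≤ ∑' i, e i / q ^ (i+1) := by
  apply Summable.tsum_le_tsum _ (summable_div_pow q hq c B hc) (summable_div_pow q hq e B he)
  intro i
  have hpow : (0:ℝ) < q ^ (i+1) := by positivity
  exact div_le_div_of_nonneg_right (h i) (le_of_lt hpow)

lemma tsum_div_pow_nonneg (q : ℝ) (hq : 1 < q) (c : ℕ → ℝ) (hc : ∀ i, 0 ≤ c i) :
    0 ≤ ∑' i, c i / q ^ (i+1) := by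
  apply tsum_nonneg; intro i; exact div_nonneg (hc i) (by positivity)

lemma tsum_div_pow_le (q : ℝ) (hq : 1 < q) (c : ℕ → ℝ) (B : ℝ)
    (hc0 : ∀ i, 0 ≤ c i) (hcB : ∀ i, c i ≤ B) :
    ∑' i, c i / q ^ (i+1) ≤ B / (q - 1) := by
  have hB : 0 ≤ B := le_trans (hc0 0) (hcB 0)
  rw [← tsum_const_div_pow q hq B]
  exact tsum_le_of_le q hq c (fun _ => B) B
    (fun i => by rw [abs_of_nonneg (hc0 i)]; exact hcB i)
    (fun i => by rw [abs_of_nonneg hB]) hcB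

lemma piQ_nonneg (q : ℝ) (hq : 1 < q) (d : Digits M) : 0 ≤ piQ M q d :=
  tsum_div_pow_nonneg q hq _ (digit_nonneg d)

lemma piQ_le (q : ℝ) (hq : 1 < q) (d : Digits M) : piQ M q d ≤ (M:ℝ) / (q - 1) :=
  tsum_div_pow_le q hq _ (M:ℝ) (digit_nonneg d) (digit_le d)

/-- Splitting a geometric-type sum at index `n`. -/
lemma tsum_split (q : ℝ) (hq : 1 < q) (c : ℕ → ℝ) (B : ℝ) (hc : ∀ i, |c i| ≤ B) (n : ℕ) :
    ∑' i, c i / q ^ (i+1)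
      = (∑ i ∈ Finset.range n, c i / q ^ (i+1)) + c n / q ^ (n+1)
        + (∑' i, c (n+1+i) / q ^ (i+1)) / q ^ (n+1) := by
  have h0 : 0 < q := lt_trans one_pos hq
  have hqne : q ≠ 0 := ne_of_gt h0
  have hsum : Summable (fun i => c i / q ^ (i+1)) := summable_div_pow q hq c B hc
  have hsplit := Summable.sum_add_tsum_nat_add (f := fun i => c i / q ^ (i+1)) (n+1) hsum
  rw [← hsplit, Finset.sum_range_succ]
  have htail : ∑' i, c (i + (n+1)) / q ^ (i + (n+1) + 1)
      = (∑' i, c (n+1+i) / q ^ (i+1)) / q ^ (n+1) := by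
    rw [← tsum_div_const]
    apply tsum_congr; intro i
    have h1 : i + (n+1) = n+1+i := by ring
    have h2 : q ^ (n+1+i+1) = q ^ (i+1) * q ^ (n+1) := by ring
    rw [h1, h2, div_div]
  rw [htail]

end Aux
section Greedy

variable {M : ℕ}

/-- greedy remainders -/
noncomputable def grem (M : ℕ) (q v : ℝ) : ℕ → ℝ
  | 0 => v
  | (k+1) => q * grem M q v k - (min M ⌊q * grem M q v k⌋₊ : ℕ)

/-- greedy digits -/
noncomputable def gdig (M : ℕ) (q v : ℝ) (k : ℕ) : ℕ := min M ⌊q * grem M q v k⌋₊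

lemma grem_mem {q v : ℝ} (hq1 : 1 < q) (hq2 : q ≤ (M:ℝ) + 1) (hM : 0 < M)
    (hv0 : 0 ≤ v) (hv1 : v ≤ (M:ℝ) / (q - 1)) :
    ∀ k, 0 ≤ grem M q v k ∧ grem M q v k ≤ (M:ℝ) / (q - 1) := by
  have h0 : 0 < q := lt_trans one_pos hq1
  have hq1' : 0 < q - 1 := by linarith
  have hone : (1:ℝ) ≤ (M:ℝ) / (q - 1) := by
    rw [le_div_iff₀ hq1']
    have : (q:ℝ) - 1 ≤ M := by
      have : (q:ℝ) ≤ M + 1 := hq2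
      linarith
    linarith
  intro k
  induction k with
  | zero => exact ⟨hv0, hv1⟩
  | succ k ih =>
    obtain ⟨h1, h2⟩ := ih
    have hqr : 0 ≤ q * grem M q v k := mul_nonneg (le_of_lt h0) h1
    by_cases hcase : M ≤ ⌊q * grem M q v k⌋₊
    · have hmin : min M ⌊q * grem M q v k⌋₊ = M := min_eq_left hcase
      have hMle : (M:ℝ) ≤ q * grem M q v k := by
        calc (M:ℝ) ≤ (⌊q * grem M q v k⌋₊ : ℕ) := by exact_mod_cast hcase
          _ ≤ q * grem M q v k := Nat.floor_le hqr
      constructor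
      · show 0 ≤ q * grem M q v k - (min M ⌊q * grem M q v k⌋₊ : ℕ)
        rw [hmin]; linarith
      · show q * grem M q v k - (min M ⌊q * grem M q v k⌋₊ : ℕ) ≤ (M:ℝ) / (q - 1)
        rw [hmin]
        have : q * grem M q v k ≤ q * ((M:ℝ) / (q-1)) :=
          mul_le_mul_of_nonneg_left h2 (le_of_lt h0)
        have heq : q * ((M:ℝ) / (q-1)) - M = (M:ℝ) / (q-1) := by
          field_simp; ring
        linarith
    · push_neg at hcase
      have hmin : min M ⌊q * grem M q v k⌋₊ = ⌊q * grem M q v k⌋₊ :=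
        min_eq_right (le_of_lt hcase)
      constructor
      · show 0 ≤ q * grem M q v k - (min M ⌊q * grem M q v k⌋₊ : ℕ)
        rw [hmin]
        have := Nat.floor_le hqr
        linarith
      · show q * grem M q v k - (min M ⌊q * grem M q v k⌋₊ : ℕ) ≤ (M:ℝ) / (q - 1)
        rw [hmin]
        have := Nat.lt_floor_add_one (q * grem M q v k)
        linarith

lemma grem_partial {q v : ℝ} (hq1 : 1 < q) :
    ∀ n, v = (∑ k ∈ Finset.range n, (gdig M q v k : ℝ) / q ^ (k+1)) + grem M q v n / q ^ n := by
  have h0 : 0 < q := lt_trans one_pos hq1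
  have hqne : q ≠ 0 := ne_of_gt h0
  intro n
  induction n with
  | zero => simp [grem]
  | succ n ih =>
    rw [Finset.sum_range_succ]
    have hstep : grem M q v n / q ^ n
        = (gdig M q v n : ℝ) / q ^ (n+1) + grem M q v (n+1) / q ^ (n+1) := by
      show grem M q v n / q ^ n
        = (gdig M q v n : ℝ) / q ^ (n+1)
          + (q * grem M q v n - (min M ⌊q * grem M q v n⌋₊ : ℕ)) / q ^ (n+1)
      rw [gdig]
      field_simp
      ring
    nth_rewrite 1 [ih]
    rw [hstep]
    ring

lemma gdig_le (q v : ℝ) (k : ℕ) : gdig M q v k ≤ M := min_le_left _ _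

/-- Every value in `[0, M/(q-1)]` has a `q`-expansion. -/
lemma exists_expansion {q v : ℝ} (hq1 : 1 < q) (hq2 : q ≤ (M:ℝ) + 1) (hM : 0 < M)
    (hv0 : 0 ≤ v) (hv1 : v ≤ (M:ℝ) / (q - 1)) :
    ∃ d : Digits M, piQ M q d = v := by
  have h0 : 0 < q := lt_trans one_pos hq1
  refine ⟨fun k => ⟨gdig M q v k, Nat.lt_succ_of_le (gdig_le q v k)⟩, ?_⟩
  have hsum : Summable (fun k => ((gdig M q v k : ℕ) : ℝ) / q ^ (k+1)) := by
    apply summable_div_pow q hq1 _ (M:ℝ)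
    intro i
    rw [abs_of_nonneg (Nat.cast_nonneg _)]
    exact_mod_cast gdig_le q v i
  have hmem := grem_mem hq1 hq2 hM hv0 hv1
  have htend : Filter.Tendsto (fun n => ∑ k ∈ Finset.range n, ((gdig M q v k : ℕ) : ℝ) / q ^ (k+1))
      Filter.atTop (nhds v) := by
    have heq : ∀ n, ∑ k ∈ Finset.range n, ((gdig M q v k : ℕ) : ℝ) / q ^ (k+1)
        = v - grem M q v n / q ^ n := fun n => by
      have := grem_partial (M := M) (v := v) hq1 n; linarith
    simp only [heq]
    have hz : Filter.Tendsto (fun n : ℕ => grem M q v n / q ^ n) Filter.atTop (nhds 0) := by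
      apply squeeze_zero_norm (a := fun n : ℕ => ((M:ℝ) / (q-1)) * q⁻¹ ^ n)
      · intro n
        have hp : (0:ℝ) < q ^ n := by positivity
        rw [Real.norm_eq_abs, abs_div, abs_of_pos hp,
          abs_of_nonneg (hmem n).1, div_le_iff₀ hp]
        calc grem M q v n ≤ (M:ℝ)/(q-1) := (hmem n).2
          _ = (M:ℝ)/(q-1) * q⁻¹ ^ n * q ^ n := by
              rw [mul_assoc, inv_pow, inv_mul_cancel₀ (ne_of_gt hp), mul_one]
      · have : Filter.Tendsto (fun n : ℕ => q⁻¹ ^ n) Filter.atTop (nhds 0) :=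
          tendsto_pow_atTop_nhds_zero_of_lt_one (by positivity) (inv_lt_one_of_one_lt₀ hq1)
        simpa using this.const_mul ((M:ℝ)/(q-1))
    have := Filter.Tendsto.const_sub v hz
    simpa using this
  have := hsum.hasSum.tendsto_sum_nat
  exact tendsto_nhds_unique this htend

end Greedy
section Core

variable {M : ℕ}

/-- The lexicographic-type condition characterizing unique expansions. -/
def Cond (M : ℕ) (q : ℝ) (d : Digits M) : Prop :=
  ∀ n, ((d n : ℕ) < M → (∑' i, ((d (n+1+i) : ℕ) : ℝ) / q ^ (i+1)) < 1) ∧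
       (0 < (d n : ℕ) → (∑' i, ((M:ℝ) - ((d (n+1+i) : ℕ) : ℝ)) / q ^ (i+1)) < 1)

lemma piQ_eq_tsum (q : ℝ) (d : Digits M) :
    piQ M q d = ∑' i, ((d i : ℕ) : ℝ) / q ^ (i+1) := rfl

lemma unique_of_cond {q : ℝ} (hq : 1 < q) (d : Digits M) (hcond : Cond M q d) :
    d ∈ UqSym M q := by
  intro e he
  by_contra hne
  have hex : ∃ n, e n ≠ d n := by
    by_contra h; push_neg at h; exact hne (funext h)
  set n := Nat.find hex with hn
  have hne_n : e n ≠ d n := Nat.find_spec hex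
  have hagree : ∀ i < n, e i = d i := by
    intro i hi
    by_contra h
    exact Nat.find_min hex hi h
  set c : ℕ → ℝ := fun i => ((e i : ℕ) : ℝ) - ((d i : ℕ) : ℝ) with hc
  have hcB : ∀ i, |c i| ≤ (M:ℝ) := by
    intro i; rw [abs_le]; constructor
    · have h1 := digit_le d i; have h2 := digit_nonneg e i
      simp only [hc]; linarith
    · have h1 := digit_le e i; have h2 := digit_nonneg d i
      simp only [hc]; linarith
  have hsum_e := summable_piQ q hq e
  have hsum_d := summable_piQ q hq d
  have htsum0 : ∑' i, c i / q^(i+1) = 0 := by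
    have : ∀ i, c i / q^(i+1) = ((e i:ℕ):ℝ)/q^(i+1) - ((d i:ℕ):ℝ)/q^(i+1) := by
      intro i; simp only [hc]; ring
    rw [tsum_congr this, Summable.tsum_sub hsum_e hsum_d, ← piQ_eq_tsum, ← piQ_eq_tsum, he, sub_self]
  have hsplit := tsum_split q hq c (M:ℝ) hcB n
  have hzero : ∑ i ∈ Finset.range n, c i / q^(i+1) = 0 := by
    apply Finset.sum_eq_zero
    intro i hi
    have : e i = d i := hagree i (Finset.mem_range.mp hi)
    simp [hc, this]
  rw [htsum0, hzero, zero_add] at hsplit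
  set T := ∑' i, c (n+1+i) / q ^ (i+1) with hT
  have hpow : (0:ℝ) < q ^ (n+1) := by positivity
  have hcnT : c n + T = 0 := by
    have := hsplit
    field_simp at this
    linarith
  have hvne : (e n : ℕ) ≠ (d n : ℕ) := fun h => hne_n (Fin.ext h)
  rcases hvne.lt_or_gt with hlt | hgt
  · -- e n < d n, so T = d n - e n ≥ 1 but T < 1 via cond (ii)
    have h1T : (1:ℝ) ≤ T := by
      have : ((e n:ℕ):ℝ) + 1 ≤ ((d n:ℕ):ℝ) := by exact_mod_cast Nat.succ_le_of_lt hlt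
      simp only [hc] at hcnT
      linarith
    have hTle : T ≤ ∑' i, ((M:ℝ) - ((d (n+1+i) : ℕ) : ℝ)) / q ^ (i+1) := by
      apply tsum_le_of_le q hq _ _ (M:ℝ) (fun i => hcB _)
      · intro i
        have h1 := digit_le d (n+1+i); have h2 := digit_nonneg d (n+1+i)
        rw [abs_le]; constructor <;> linarith
      · intro i
        have := digit_le e (n+1+i)
        simp only [hc]; linarith
    have hdnpos : 0 < (d n : ℕ) := by omega
    have := (hcond n).2 hdnpos
    linarith
  · -- d n < e n, so -T ≥ 1 but -T < 1 via cond (i)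
    have h1T : (1:ℝ) ≤ -T := by
      have : ((d n:ℕ):ℝ) + 1 ≤ ((e n:ℕ):ℝ) := by exact_mod_cast Nat.succ_le_of_lt hgt
      simp only [hc] at hcnT
      linarith
    have hnegT : -T = ∑' i, (-(c (n+1+i))) / q ^ (i+1) := by
      rw [hT, ← tsum_neg]
      apply tsum_congr; intro i; ring
    have hTle : -T ≤ ∑' i, ((d (n+1+i) : ℕ) : ℝ) / q ^ (i+1) := by
      rw [hnegT]
      apply tsum_le_of_le q hq _ _ (M:ℝ)
      · intro i; rw [abs_neg]; exact hcB _
      · exact fun i => abs_digit_le d _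
      · intro i
        have := digit_nonneg e (n+1+i)
        simp only [hc]; linarith
    have hdnlt : (d n : ℕ) < M := by
      have := Nat.le_of_lt_succ (e n).isLt
      omega
    have := (hcond n).1 hdnlt
    linarith

end Core
section CondOfUnique

variable {M : ℕ}

lemma cond_of_unique {q : ℝ} (hq1 : 1 < q) (hq2 : q ≤ (M:ℝ) + 1) (hM : 0 < M)
    (d : Digits M) (hu : d ∈ UqSym M q) : Cond M q d := by
  intro n
  have h0 : 0 < q := lt_trans one_pos hq1
  have hqne : q ≠ 0 := ne_of_gt h0
  have hq1' : (0:ℝ) < q - 1 := by linarith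
  set t := ∑' i, ((d (n+1+i) : ℕ):ℝ)/q^(i+1) with ht
  have ht0 : 0 ≤ t := tsum_div_pow_nonneg q hq1 _ (fun i => digit_nonneg d _)
  have htM : t ≤ (M:ℝ)/(q-1) :=
    tsum_div_pow_le q hq1 _ (M:ℝ) (fun i => digit_nonneg d _) (fun i => digit_le d _)
  have hsumtail : Summable (fun i => ((d (n+1+i) : ℕ):ℝ)/q^(i+1)) := by
    apply summable_div_pow q hq1 _ (M:ℝ)
    exact fun i => abs_digit_le d _
  have hsumconst : Summable (fun i : ℕ => (M:ℝ)/q^(i+1)) := by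
    apply summable_div_pow q hq1 _ (M:ℝ)
    intro i; rw [abs_of_nonneg (Nat.cast_nonneg _)]
  have htbar : ∑' i, ((M:ℝ) - ((d (n+1+i):ℕ):ℝ))/q^(i+1) = (M:ℝ)/(q-1) - t := by
    have : ∀ i, ((M:ℝ) - ((d (n+1+i):ℕ):ℝ))/q^(i+1)
        = (M:ℝ)/q^(i+1) - ((d (n+1+i):ℕ):ℝ)/q^(i+1) := fun i => by ring
    rw [tsum_congr this, Summable.tsum_sub hsumconst hsumtail, tsum_const_div_pow q hq1]
  have hpow : (0:ℝ) < q ^ (n+1) := by positivity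
  -- generic construction: given digit value b replacing d n, tail expansion a,
  -- if (b:ℝ) + piQ a = (d n) + t then resulting sequence has same piQ value
  have key : ∀ (b : Fin (M+1)) (a : Digits M),
      ((b:ℕ):ℝ) + piQ M q a = ((d n:ℕ):ℝ) + t →
      (fun i => if i < n then d i else if i = n then b else a (i - (n+1))) = d := by
    intro b a hab
    set e : Digits M := fun i => if i < n then d i else if i = n then b else a (i - (n+1)) with he
    apply hu
    have hsplit_e := tsum_split q hq1 (fun i => ((e i:ℕ):ℝ)) (M:ℝ) (abs_digit_le e) n
    have hsplit_d := tsum_split q hq1 (fun i => ((d i:ℕ):ℝ)) (M:ℝ) (abs_digit_le d) n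
    have hrange : ∑ i ∈ Finset.range n, ((e i:ℕ):ℝ)/q^(i+1)
        = ∑ i ∈ Finset.range n, ((d i:ℕ):ℝ)/q^(i+1) := by
      apply Finset.sum_congr rfl
      intro i hi
      have hi' : i < n := Finset.mem_range.mp hi
      simp [he, hi']
    have hen : ((e n:ℕ):ℝ) = ((b:ℕ):ℝ) := by simp [he]
    have hetail : ∀ i, e (n+1+i) = a i := by
      intro i
      show (if n+1+i < n then d (n+1+i) else if n+1+i = n then b else a (n+1+i - (n+1))) = a i
      rw [if_neg (by omega), if_neg (by omega)]
      congr 1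
      omega
    have htail_e : ∑' i, ((e (n+1+i):ℕ):ℝ)/q^(i+1) = piQ M q a := by
      rw [piQ_eq_tsum]
      exact tsum_congr fun i => by rw [hetail i]
    rw [piQ_eq_tsum, piQ_eq_tsum, hsplit_e, hsplit_d, hrange, hen, htail_e, ← ht]
    have : ((b:ℕ):ℝ) / q^(n+1) + piQ M q a / q^(n+1)
        = ((d n:ℕ):ℝ) / q^(n+1) + t / q^(n+1) := by
      rw [← add_div, ← add_div, hab]
    linarith
  constructor
  · -- part (i)
    intro hdn
    by_contra hge
    push_neg at hge
    obtain ⟨a, ha⟩ := exists_expansion hq1 hq2 hM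
      (by linarith : (0:ℝ) ≤ t - 1) (by linarith : t - 1 ≤ (M:ℝ)/(q-1))
    have hb : (d n : ℕ) + 1 < M + 1 := by omega
    have heq := key ⟨(d n : ℕ) + 1, hb⟩ a (by push_cast [ha]; ring)
    have := congrFun heq n
    simp only [if_neg (lt_irrefl n), if_pos rfl] at this
    have := congrArg Fin.val this
    simp at this
  · -- part (ii)
    intro hdn
    by_contra hge
    push_neg at hge
    rw [htbar] at hge
    obtain ⟨a, ha⟩ := exists_expansion hq1 hq2 hM
      (by linarith : (0:ℝ) ≤ t + 1) (by linarith : t + 1 ≤ (M:ℝ)/(q-1))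
    have hb : (d n : ℕ) - 1 < M + 1 := by omega
    have heq := key ⟨(d n : ℕ) - 1, hb⟩ a ?_
    · have := congrFun heq n
      simp only [if_neg (lt_irrefl n), if_pos rfl] at this
      have := congrArg Fin.val this
      simp at this
      omega
    · rw [ha]
      have : (((d n : ℕ) - 1 : ℕ) : ℝ) = ((d n : ℕ) : ℝ) - 1 := by
        have : (1:ℕ) ≤ (d n : ℕ) := hdn
        push_cast [Nat.cast_sub this]
        ring
      rw [this]
      ring

end CondOfUnique
section Final

variable {M : ℕ}

lemma tsum_div_pow_anti {q p : ℝ} (hq : 1 < q) (hqp : q ≤ p) (c : ℕ → ℝ) (B : ℝ)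
    (hc0 : ∀ i, 0 ≤ c i) (hcB : ∀ i, c i ≤ B) :
    ∑' i, c i / p ^ (i+1) ≤ ∑' i, c i / q ^ (i+1) := by
  have hp : 1 < p := lt_of_lt_of_le hq hqp
  have habs : ∀ i, |c i| ≤ B := fun i => by
    rw [abs_of_nonneg (hc0 i)]; exact hcB i
  apply Summable.tsum_le_tsum _ (summable_div_pow p hp c B habs) (summable_div_pow q hq c B habs)
  intro i
  have h1 : (0:ℝ) < q ^ (i+1) := by positivity
  have h2 : q ^ (i+1) ≤ p ^ (i+1) := pow_le_pow_left₀ (by linarith) hqp _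
  exact div_le_div_of_nonneg_left (hc0 i) h1 h2

lemma cond_mono {q p : ℝ} (hq : 1 < q) (hqp : q ≤ p) (d : Digits M)
    (h : Cond M q d) : Cond M p d := by
  intro n
  constructor
  · intro hdn
    refine lt_of_le_of_lt ?_ ((h n).1 hdn)
    exact tsum_div_pow_anti hq hqp _ (M:ℝ) (fun i => digit_nonneg d _) (fun i => digit_le d _)
  · intro hdn
    refine lt_of_le_of_lt ?_ ((h n).2 hdn)
    apply tsum_div_pow_anti hq hqp _ (M:ℝ)
    · intro i; have := digit_le d (n+1+i); linarith
    · intro i; have := digit_nonneg d (n+1+i); linarith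

lemma not_endsInZero {q : ℝ} (hq1 : 1 < q) (hq2 : q ≤ (M:ℝ) + 1) (d : Digits M)
    (hcond : Cond M q d) (hpos : 0 < piQ M q d) : ¬ EndsInZero d := by
  rintro ⟨N, hN⟩
  have hq1' : (0:ℝ) < q - 1 := by linarith
  by_cases hall : ∀ i, d i = 0
  · have : piQ M q d = 0 := by
      rw [piQ_eq_tsum]
      have : ∀ i, ((d i : ℕ):ℝ) / q^(i+1) = 0 := fun i => by simp [hall i]
      rw [tsum_congr this, tsum_zero]
    linarith
  · push_neg at hall
    obtain ⟨m, hm⟩ := hall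
    have hmN : m ≤ N := by
      by_contra h
      exact hm (hN m (by omega))
    set n := Nat.findGreatest (fun i => d i ≠ 0) N with hn
    have hdn : d n ≠ 0 := Nat.findGreatest_spec (P := fun i => d i ≠ 0) hmN hm
    have htail : ∀ i, d (n+1+i) = 0 := by
      intro i
      by_cases hle : n+1+i ≤ N
      · by_contra h
        exact Nat.findGreatest_is_greatest (P := fun i => d i ≠ 0) (by omega) hle h
      · exact hN _ (by omega)
    have hdnpos : 0 < (d n : ℕ) := by
      rcases Nat.eq_zero_or_pos (d n : ℕ) with h | h
      · exact absurd (Fin.ext (by simp [h]) : d n = 0) hdn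
      · exact h
    have := (hcond n).2 hdnpos
    have hsum : ∑' i, ((M:ℝ) - ((d (n+1+i):ℕ):ℝ)) / q^(i+1) = (M:ℝ)/(q-1) := by
      have he : ∀ i, ((M:ℝ) - ((d (n+1+i):ℕ):ℝ)) / q^(i+1) = (M:ℝ)/q^(i+1) := fun i => by
        simp [htail i]
      rw [tsum_congr he, tsum_const_div_pow q hq1]
    rw [hsum] at this
    have : (M:ℝ)/(q-1) < 1 := this
    rw [div_lt_one hq1'] at this
    linarith

lemma Phi_eq (q x : ℝ) (d : Digits M) (hd : piQ M q d = x) (hu : d ∈ UqSym M q)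
    (hnz : ¬ EndsInZero d) : Phi M x q = d := by
  have hqg : IsQuasiGreedy M q x d :=
    ⟨hd, hnz, fun e he _ => Or.inl (hu e (he.trans hd.symm))⟩
  have hex : ∃ e : Digits M, IsQuasiGreedy M q x e := ⟨d, hqg⟩
  rw [Phi, dif_pos hex]
  exact hu _ (hex.choose_spec.1.trans hd.symm)

lemma exists_smaller_value {q y : ℝ} (hq1 : 1 < q) (hM : 0 < M) (d : Digits M)
    (hy1 : 1 < y) (hyx : y < piQ M q d) (hqM : q ≤ (M:ℝ) + 1) :
    ∃ p, q < p ∧ p ≤ (M:ℝ) + 1 ∧ piQ M p d = y := by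
  have h0 : 0 < q := lt_trans one_pos hq1
  have hq1' : (0:ℝ) < q - 1 := by linarith
  have hM1 : (1:ℝ) < (M:ℝ) + 1 := by
    have : (1:ℝ) ≤ (M:ℝ) := by exact_mod_cast hM
    linarith
  set F : ℝ → ℝ := fun t => ∑' i, ((d i : ℕ):ℝ) / (max t q) ^ (i+1) with hF
  have hmaxpos : ∀ t : ℝ, 0 < max t q := fun t => lt_of_lt_of_le h0 (le_max_right t q)
  have hcont : Continuous F := by
    apply continuous_tsum (u := fun i => (M:ℝ)/q^(i+1))
    · intro i
      apply Continuous.div continuous_const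
      · exact (continuous_id.max continuous_const).pow _
      · intro t
        exact ne_of_gt (pow_pos (hmaxpos t) _)
    · apply summable_div_pow q hq1 _ (M:ℝ)
      intro i; rw [abs_of_nonneg (Nat.cast_nonneg _)]
    · intro i t
      have hmax : q ≤ max t q := le_max_right t q
      have hp1 : (0:ℝ) < q ^ (i+1) := by positivity
      have hp2 : q ^ (i+1) ≤ (max t q) ^ (i+1) := pow_le_pow_left₀ (le_of_lt h0) hmax _
      rw [Real.norm_eq_abs, abs_div, abs_of_nonneg (Nat.cast_nonneg _),
        abs_of_pos (pow_pos (hmaxpos t) _)]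
      calc ((d i:ℕ):ℝ) / (max t q)^(i+1) ≤ ((d i:ℕ):ℝ) / q^(i+1) :=
            div_le_div_of_nonneg_left (digit_nonneg d i) hp1 hp2
        _ ≤ (M:ℝ) / q^(i+1) := div_le_div_of_nonneg_right (digit_le d i) (le_of_lt hp1)
  have hFeq : ∀ p, q ≤ p → F p = piQ M p d := by
    intro p hp
    show (∑' i, ((d i : ℕ):ℝ) / (max p q) ^ (i+1)) = piQ M p d
    rw [max_eq_left hp, piQ_eq_tsum]
  have hFq : F q = piQ M q d := hFeq q (le_refl q)
  have hFM : F ((M:ℝ)+1) ≤ 1 := by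
    rw [hFeq _ hqM]
    have := piQ_le ((M:ℝ)+1) hM1 d
    have hMM : (M:ℝ) + 1 - 1 = (M:ℝ) := by ring
    rw [hMM] at this
    have hMne : (M:ℝ) ≠ 0 := by positivity
    rw [div_self hMne] at this
    exact this
  have hsub := intermediate_value_Icc' hqM hcont.continuousOn
  have hymem : y ∈ Set.Icc (F ((M:ℝ)+1)) (F q) := by
    constructor
    · linarith
    · rw [hFq]; linarith
  obtain ⟨p, hpI, hpy⟩ := hsub hymem
  refine ⟨p, ?_, hpI.2, by rw [← hFeq p hpI.1]; exact hpy⟩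
  rcases lt_or_eq_of_le hpI.1 with h | h
  · exact h
  · exfalso
    rw [← h] at hpy
    rw [hFq] at hpy
    linarith

end Final
/-- The set-valued map `x ↦ 𝐔(x)` is non-increasing on `(1,∞)`: if `1 < y < x`
then `𝐔(x) ⊆ 𝐔(y)`. -/
theorem UxSym_antitone (M : ℕ) (hM : 0 < M) (x y : ℝ) (hy : 1 < y) (hyx : y < x) :
    UxSym M x ⊆ UxSym M y := by
  rintro s ⟨q, ⟨hqIoc, hxUq⟩, rfl⟩
  obtain ⟨hq1, hqM⟩ := hqIoc
  obtain ⟨d, hd, huniq⟩ := hxUq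
  have hdu : d ∈ UqSym M q := fun e he => huniq e (he.trans hd)
  have hcond := cond_of_unique hq1 hqM hM d hdu
  have hx1 : 1 < x := lt_trans hy hyx
  have hnez : ¬ EndsInZero d := not_endsInZero hq1 hqM d hcond (by rw [hd]; linarith)
  have hPhi : Phi M x q = d := Phi_eq q x d hd hdu hnez
  rw [hPhi]
  obtain ⟨p, hqp, hpM, hpy⟩ :=
    exists_smaller_value hq1 hM d hy (by rw [hd]; exact hyx) hqM
  have hp1 : 1 < p := lt_trans hq1 hqp
  have hcondp := cond_mono hq1 (le_of_lt hqp) d hcond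
  have hup : d ∈ UqSym M p := unique_of_cond hp1 d hcondp
  exact ⟨p, ⟨⟨hp1, hpM⟩, ⟨d, hpy, fun e he => hup e (he.trans hpy.symm)⟩⟩,
    Phi_eq p y d hpy hup hnez⟩

end Expansions
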